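/- If s ≡_ε t (s and t are related by some ε-APB) with ε ∈ (0,1), then s ∼^2_ε t, i.e., s and t are up-to-(2,ε)-bisimilar. -/
import Mathlib


open scoped BigOperators

attribute [local instance] Classical.propDecidable

/-- Mass that a (sub)distribution `μ` assigns to a set `A`. -/
noncomputable def pmass {S : Type*} (μ : S → ℝ) (A : Set S) : ℝ := ∑' a : A, μ a

/-- L1-distance between two functions `S → ℝ`. -/
noncomputable def l1dist {S : Type*} (μ ν : S → ℝ) : ℝ := ∑' s, |μ s - ν s|

/-- `μ : S → ℝ` is a probability distribution. -/
def IsDistr {S : Type*} (μ : S → ℝ) : Prop :=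
  (∀ s, 0 ≤ μ s) ∧ (∀ s, μ s ≤ 1) ∧ HasSum μ 1

/-- Image of a set under a relation. -/
def relImg {S : Type*} (R : S → S → Prop) (A : Set S) : Set S := {t | ∃ s ∈ A, R s t}

/-- ε-bisimulation on a labeled Markov chain with transition function `P` and labeling `lab`. -/
def IsEpsBisim {S L : Type*} (P : S → S → ℝ) (lab : S → L) (ε : ℝ)
    (R : S → S → Prop) : Prop :=
  Reflexive R ∧ Symmetric R ∧
    ∀ s t, R s t → lab s = lab t ∧
      ∀ A : Set S, pmass (P s) A ≤ pmass (P t) (relImg R A) + ε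

/-- ε-APB (approximate probabilistic bisimulation with precision ε). -/
def IsEpsAPB {S L : Type*} (P : S → S → ℝ) (lab : S → L) (ε : ℝ)
    (R : S → S → Prop) : Prop :=
  Reflexive R ∧ Symmetric R ∧
    ∀ s t, R s t → lab s = lab t ∧
      ∀ A : Set S, relImg R A ⊆ A → |pmass (P s) A - pmass (P t) A| ≤ ε

/-- Weight of a finite path witnessing `B U A` starting at `s` and continuing along the list. -/
noncomputable def untilWeight {S : Type*} (P : S → S → ℝ) (B A : Set S) :
    S → List S → ℝ
  | s, [] => if s ∈ A then 1 else 0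
  | s, t :: rest =>
      if s ∈ A then 0 else if s ∈ B then P s t * untilWeight P B A t rest else 0

/-- `Pr_s(B U A)`: probability of reaching `A` from `s` via states in `B`. -/
noncomputable def untilProb {S : Type*} (P : S → S → ℝ) (B A : Set S) (s : S) : ℝ :=
  ∑' l : List S, untilWeight P B A s l

/-- `Pr_s(□C)`: probability of staying in `C` forever, `= 1 - Pr_s(C U Cᶜ)`. -/
noncomputable def boxProb {S : Type*} (P : S → S → ℝ) (C : Set S) (s : S) : ℝ :=
  1 - untilProb P C Cᶜ s

/-- Weak ε-bisimulation. -/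
def IsWeakEpsBisim {S L : Type*} (P : S → S → ℝ) (lab : S → L) (ε : ℝ)
    (R : S → S → Prop) : Prop :=
  Reflexive R ∧ Symmetric R ∧
    ∀ s t, R s t → lab s = lab t ∧
      ∀ A : Set S, untilProb P {u | lab u = lab s} A s ≤
        untilProb P {u | lab u = lab t} (relImg R A) t + ε

/-- Weak ε-bisimilarity of two states. -/
def WeakEpsBisimilar {S L : Type*} (P : S → S → ℝ) (lab : S → L) (ε : ℝ)
    (s t : S) : Prop :=
  ∃ R, IsWeakEpsBisim P lab ε R ∧ R s t

/-- Up-to-(n,ε)-bisimilarity. -/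
def upTo {S L : Type*} (P : S → S → ℝ) (lab : S → L) (ε : ℝ) :
    ℕ → S → S → Prop
  | 0, _, _ => True
  | n + 1, s, t => lab s = lab t ∧
      ∀ A : Set S,
        pmass (P s) A ≤ pmass (P t) (relImg (upTo P lab ε n) A) + ε ∧
        pmass (P t) A ≤ pmass (P s) (relImg (upTo P lab ε n) A) + ε

/-- Branching ε-bisimulation. -/
def IsBranchingEpsBisim {S L : Type*} (P : S → S → ℝ) (lab : S → L) (ε : ℝ)
    (R : S → S → Prop) : Prop :=
  Equivalence R ∧
    ∀ s t, R s t → lab s = lab t ∧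
      ∀ A : Set S, relImg R A ⊆ A →
        |untilProb P {u | R s u} A s - untilProb P {u | R t u} A t| ≤ ε

/-- Transitive ε-bisimulation (equivalently, an ε-APB which is an equivalence). -/
def IsTransEpsBisim {S L : Type*} (P : S → S → ℝ) (lab : S → L) (ε : ℝ)
    (R : S → S → Prop) : Prop :=
  Equivalence R ∧
    ∀ s t, R s t → lab s = lab t ∧
      ∀ A : Set S, relImg R A ⊆ A → |pmass (P s) A - pmass (P t) A| ≤ ε

/-- Exact probabilistic bisimulation. -/
def IsExactBisim {S L : Type*} (P : S → S → ℝ) (lab : S → L)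
    (R : S → S → Prop) : Prop :=
  Equivalence R ∧
    ∀ s t, R s t → lab s = lab t ∧
      ∀ c, pmass (P s) {u | R c u} = pmass (P t) {u | R c u}

/-- `Pr_s(◇^{≤k} G)`: probability of reaching `G` from `s` within `k` steps. -/
noncomputable def reachLe {S : Type*} (P : S → S → ℝ) (G : Set S) :
    ℕ → S → ℝ
  | 0, s => if s ∈ G then 1 else 0
  | k + 1, s => if s ∈ G then 1 else ∑' t, P s t * reachLe P G k t

section Aux

variable {S : Type*}

lemma pmass_nonneg {μ : S → ℝ} (h : ∀ s, 0 ≤ μ s) (A : Set S) : 0 ≤ pmass μ A :=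
  tsum_nonneg fun a => h a

lemma pmass_mono {μ : S → ℝ} (h : ∀ s, 0 ≤ μ s) (hsum : Summable μ)
    {A B : Set S} (hAB : A ⊆ B) : pmass μ A ≤ pmass μ B := by
  unfold pmass
  rw [tsum_subtype, tsum_subtype]
  exact Summable.tsum_le_tsum (fun a => Set.indicator_le_indicator_of_subset hAB h a)
    (hsum.indicator A) (hsum.indicator B)

lemma pmass_le_one {μ : S → ℝ} (h : ∀ s, 0 ≤ μ s) (hsum : HasSum μ 1)
    (A : Set S) : pmass μ A ≤ 1 := by
  have : pmass μ A ≤ pmass μ Set.univ :=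
    pmass_mono h hsum.summable (Set.subset_univ A)
  calc pmass μ A ≤ pmass μ Set.univ := this
    _ = ∑' a, μ a := tsum_univ μ
    _ = 1 := hsum.tsum_eq

lemma upTo_one_iff {L : Type*} (P : S → S → ℝ) (lab : S → L)
    (hP : ∀ s, IsDistr (P s)) (ε : ℝ) (hε0 : 0 < ε) (u v : S) :
    upTo P lab ε 1 u v ↔ lab u = lab v := by
  constructor
  · intro h; exact h.1
  · intro hl
    refine ⟨hl, fun A => ?_⟩
    rcases Set.eq_empty_or_nonempty A with hA | hA
    · subst hA
      have he : relImg (upTo P lab ε 0) (∅ : Set S) = ∅ := by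
        ext x; simp [relImg]
      rw [he]
      have h0 : pmass (P u) (∅ : Set S) = 0 := by
        simp [pmass]
      have h0' : pmass (P v) (∅ : Set S) = 0 := by
        simp [pmass]
      constructor <;> simp [h0, h0'] <;> positivity
    · have huniv : relImg (upTo P lab ε 0) A = Set.univ := by
        ext x; simp only [relImg, Set.mem_setOf_eq, Set.mem_univ, iff_true]
        exact ⟨hA.choose, hA.choose_spec, trivial⟩
      rw [huniv]
      have h1 : ∀ w : S, pmass (P w) Set.univ = 1 := fun w => by
        unfold pmass
        rw [tsum_univ]; exact (hP w).2.2.tsum_eq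
      constructor
      · calc pmass (P u) A ≤ 1 := pmass_le_one (hP u).1 (hP u).2.2 A
          _ ≤ pmass (P v) Set.univ + ε := by rw [h1]; linarith
      · calc pmass (P v) A ≤ 1 := pmass_le_one (hP v).1 (hP v).2.2 A
          _ ≤ pmass (P u) Set.univ + ε := by rw [h1]; linarith

end Aux

theorem epsAPB_implies_upTo_two {S L : Type*} [Countable S] [Nonempty S]
    (P : S → S → ℝ) (lab : S → L)
    (hP : ∀ s, IsDistr (P s)) (hfb : ∀ s, (Function.support (P s)).Finite)
    (ε : ℝ) (hε0 : 0 < ε) (hε1 : ε < 1)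
    (s t : S) (hst : ∃ R, IsEpsAPB P lab ε R ∧ R s t) :
    upTo P lab ε 2 s t := by
  obtain ⟨R, ⟨hrefl, hsymm, hmain⟩, hRst⟩ := hst
  have hlab : ∀ u v, R u v → lab u = lab v := fun u v h => (hmain u v h).1
  have hsum : ∀ w : S, Summable (P w) := fun w => summable_of_finite_support (hfb w)
  -- the R-closure of a set
  set cl : Set S → Set S := fun A => relImg (Relation.ReflTransGen R) A with hcl
  have hsub : ∀ A : Set S, A ⊆ cl A := fun A a ha => ⟨a, ha, Relation.ReflTransGen.refl⟩
  have hclosed : ∀ A : Set S, relImg R (cl A) ⊆ cl A := by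
    rintro A x ⟨y, ⟨a, ha, hay⟩, hyx⟩
    exact ⟨a, ha, hay.tail hyx⟩
  have hlabcl : ∀ A : Set S, cl A ⊆ relImg (upTo P lab ε 1) A := by
    rintro A x ⟨a, ha, hax⟩
    refine ⟨a, ha, (upTo_one_iff P lab hP ε hε0 a x).2 ?_⟩
    induction hax with
    | refl => rfl
    | tail _ h ih => exact ih.trans (hlab _ _ h)
  have key : ∀ u v : S, R u v → ∀ A : Set S,
      pmass (P u) A ≤ pmass (P v) (relImg (upTo P lab ε 1) A) + ε := by
    intro u v huv A
    have h1 : pmass (P u) A ≤ pmass (P u) (cl A) :=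
      pmass_mono (hP u).1 (hsum u) (hsub A)
    have h2 : |pmass (P u) (cl A) - pmass (P v) (cl A)| ≤ ε :=
      (hmain u v huv).2 (cl A) (hclosed A)
    have h3 : pmass (P v) (cl A) ≤ pmass (P v) (relImg (upTo P lab ε 1) A) :=
      pmass_mono (hP v).1 (hsum v) (hlabcl A)
    have := abs_le.mp h2
    linarith [this.1, this.2]
  exact ⟨hlab s t hRst, fun A => ⟨key s t hRst A, key t s (hsymm hRst) A⟩⟩
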